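/- If O₁ and O₂ are henselian valuation rings on a field K and at least one of their residue fields is not separably closed, then O₁ and O₂ are comparable, i.e., O₁ ⊆ O₂ or O₂ ⊆ O₁. -/

import Mathlib

open Polynomial

section Aux

variable {K : Type*} [Field K]

private lemma gz_mul_lt_one {Γ : Type*} [LinearOrderedCommGroupWithZero Γ] {a b : Γ}
    (ha : a ≤ 1) (hb : b < 1) : a * b < 1 :=
  ((mul_le_mul_left ha b).trans_eq (one_mul b)).trans_lt hb

private lemma gz_mul_lt_one' {Γ : Type*} [LinearOrderedCommGroupWithZero Γ] {a b : Γ}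
    (ha : a < 1) (hb : b ≤ 1) : a * b < 1 :=
  ((mul_le_mul_right hb a).trans_eq (mul_one a)).trans_lt ha

/-- Key auxiliary: if `O₂` is henselian and the residue field of `O₁` is not separably
closed, then `O₁` and `O₂` are comparable. -/
private theorem aux_comparable (O₁ O₂ : ValuationSubring K)
    (h₂ : HenselianLocalRing O₂)
    (hres : ¬ IsSepClosed (IsLocalRing.ResidueField O₁)) :
    O₁ ≤ O₂ ∨ O₂ ≤ O₁ := by
  by_contra hcon
  push_neg at hcon
  obtain ⟨h12, h21⟩ := hcon
  set v₁ := O₁.valuation with hv₁def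
  set v₂ := O₂.valuation with hv₂def
  -- Step 1 : find t with v₁ t < 1 < v₂ t
  obtain ⟨a, ha1, ha2⟩ := SetLike.not_le_iff_exists.mp h12
  obtain ⟨b, hb2, hb1⟩ := SetLike.not_le_iff_exists.mp h21
  have ha0 : a ≠ 0 := fun h => ha2 (h ▸ O₂.zero_mem)
  have hb0 : b ≠ 0 := fun h => hb1 (h ▸ O₁.zero_mem)
  set t : K := a / b with htdef
  have ht0 : t ≠ 0 := div_ne_zero ha0 hb0
  have hva : v₁ a ≤ 1 := (O₁.valuation_le_one_iff a).mpr ha1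
  have hv1b : 1 < v₁ b := lt_of_not_ge (fun h => hb1 ((O₁.valuation_le_one_iff b).mp h))
  have hv2a : 1 < v₂ a := lt_of_not_ge (fun h => ha2 ((O₂.valuation_le_one_iff a).mp h))
  have hvb : v₂ b ≤ 1 := (O₂.valuation_le_one_iff b).mpr hb2
  have hv2b0 : v₂ b ≠ 0 := by simpa using hb0
  have ht1 : v₁ t < 1 := by
    rw [htdef, map_div₀, div_eq_mul_inv]
    exact gz_mul_lt_one hva (inv_lt_one_of_one_lt₀ hv1b)
  have ht2 : 1 < v₂ t := by
    rw [htdef, map_div₀, div_eq_mul_inv]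
    calc (1:_) < v₂ a := hv2a
    _ = v₂ a * 1 := (mul_one _).symm
    _ ≤ v₂ a * (v₂ b)⁻¹ := mul_le_mul_right ((one_le_inv₀ (zero_lt_iff.mpr hv2b0)).mpr hvb) _
  have htO₁ : t ∈ O₁ := (O₁.valuation_le_one_iff t).mp ht1.le
  have ht2ne : v₂ t ≠ 0 := by simpa using ht0
  -- Step 2 : a monic polynomial over the residue field with no root
  obtain ⟨p, hmon, hirr, hsep, hnoroot⟩ :
      ∃ p : (IsLocalRing.ResidueField O₁)[X],
        p.Monic ∧ Irreducible p ∧ p.Separable ∧ ∀ x, p.eval x ≠ 0 := by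
    by_contra hc
    push_neg at hc
    exact hres (IsSepClosed.of_exists_root _ (fun p h1 h2 h3 => hc p h1 h2 h3))
  set n := p.natDegree with hndef
  have hn2 : 2 ≤ n := by
    by_contra hlt
    push_neg at hlt
    have h1 : 0 < n := hirr.natDegree_pos
    have hn1 : p.natDegree = 1 := by omega
    apply hnoroot (-(p.coeff 0))
    rw [hmon.eq_X_add_C hn1]
    simp
  have hn0 : 0 < n := by omega
  -- Step 3 : Lemma A : good lifts of residues
  have lemA : ∀ c : IsLocalRing.ResidueField O₁,
      ∃ α : O₁, IsLocalRing.residue O₁ α = c ∧ v₂ (α : K) < 1 := by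
    intro c
    obtain ⟨l, hl⟩ := Ideal.Quotient.mk_surjective c
    by_cases hc2 : v₂ (l : K) < 1
    · exact ⟨l, hl, hc2⟩
    · push_neg at hc2
      have hvl1 : v₁ (l : K) ≤ 1 := (O₁.valuation_le_one_iff _).mpr l.2
      have hl0 : (l : K) ≠ 0 := by
        intro h
        rw [h] at hc2
        simp at hc2
      have hvl0 : v₂ (l : K) ≠ 0 := by simpa using hl0
      set τ : K := t * (l : K) ^ 2 with hτdef
      have hτ1 : v₁ τ < 1 := by
        rw [hτdef, map_mul, map_pow]
        exact gz_mul_lt_one' ht1 (pow_le_one₀ (zero_le') hvl1)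
      have hτ2 : 1 < v₂ τ := by
        rw [hτdef, map_mul, map_pow]
        calc (1:_) < v₂ t := ht2
        _ = v₂ t * 1 := (mul_one _).symm
        _ ≤ v₂ t * (v₂ (l:K)) ^ 2 := mul_le_mul_right (one_le_pow₀ hc2) _
      have hτ0 : τ ≠ 0 := by
        intro h
        rw [h] at hτ2
        simp at hτ2
      have h1τ1 : v₁ (1 + τ) = 1 := by
        rw [Valuation.map_add_eq_of_lt_left _ (by simpa using hτ1), map_one]
      have h1τ2 : v₂ (1 + τ) = v₂ τ := by
        rw [Valuation.map_add_eq_of_lt_right _ (by simpa using hτ2)]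
      have h1τ0 : (1 : K) + τ ≠ 0 := by
        intro h
        rw [h] at h1τ1
        simp at h1τ1
      set u : K := (1 + τ)⁻¹ with hudef
      have hu1 : v₁ u = 1 := by rw [hudef, map_inv₀, h1τ1, inv_one]
      set α : K := (l : K) * u with hαdef
      have hα1 : v₁ α ≤ 1 := by
        rw [hαdef, map_mul, hu1, mul_one]
        exact hvl1
      have hαO₁ : α ∈ O₁ := (O₁.valuation_le_one_iff α).mp hα1
      -- v₂ α < 1 : α * (t * l) = τ * (1+τ)⁻¹ has value 1, and 1 < v₂ (t*l)
      have hkey : α * (t * (l : K)) = τ * u := by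
        rw [hαdef, hudef, hτdef]; ring
      have hvtl : 1 < v₂ (t * (l : K)) := by
        rw [map_mul]
        calc (1:_) < v₂ t := ht2
        _ = v₂ t * 1 := (mul_one _).symm
        _ ≤ v₂ t * v₂ (l:K) := mul_le_mul_right hc2 _
      have hvτu : v₂ (τ * u) = 1 := by
        rw [map_mul, hudef, map_inv₀, h1τ2, mul_inv_cancel₀ (by simpa using hτ0)]
      have hα2 : v₂ α < 1 := by
        have h := congrArg v₂ hkey
        rw [map_mul, hvτu] at h
        by_contra hge
        push_neg at hge
        have : (1:_) < v₂ α * v₂ (t * (l:K)) :=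
          lt_of_lt_of_le hvtl (by
            calc v₂ (t * (l:K)) = 1 * v₂ (t * (l:K)) := (one_mul _).symm
            _ ≤ v₂ α * v₂ (t * (l:K)) := mul_le_mul_left hge _)
        rw [h] at this
        exact absurd this (lt_irrefl _)
      refine ⟨⟨α, hαO₁⟩, ?_, hα2⟩
      -- residue : α - l ∈ maximal ideal
      rw [← hl]
      have hsub : (⟨α, hαO₁⟩ - l : O₁) ∈ IsLocalRing.maximalIdeal O₁ := by
        rw [O₁.valuation_lt_one_iff]
        have hcoe : ((⟨α, hαO₁⟩ - l : O₁) : K) = -(τ * ((l:K) * u)) := by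
          push_cast
          rw [hαdef, hudef, hτdef]
          have hu' : ((1:K) + t * (l:K) ^ 2)⁻¹ * (1 + t * (l:K) ^ 2) = 1 := inv_mul_cancel₀ h1τ0
          linear_combination (l:K) * hu'
        rw [hcoe, v₁.map_neg, v₁.map_mul τ ((l : K) * u), v₁.map_mul (l : K) u, hu1,
          mul_one]
        exact gz_mul_lt_one' hτ1 hvl1
      have := (Ideal.Quotient.eq (I := IsLocalRing.maximalIdeal O₁)).mpr hsub
      exact this
  -- Step 4 : the lifted coefficients
  choose A hAres hAv2 using fun i : ℕ => lemA (p.coeff i)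
  have htmem : t ∈ O₁ := htO₁
  set T : O₁ := ⟨t, htO₁⟩ with hTdef
  have hTres : IsLocalRing.residue O₁ T = 0 := by
    have hTm : T ∈ IsLocalRing.maximalIdeal O₁ := by
      rw [O₁.valuation_lt_one_iff]
      exact ht1
    exact Ideal.Quotient.eq_zero_iff_mem.mpr hTm
  set AA : ℕ → O₁ := fun i => if i = 1 then A 1 + T ^ (n - 1) else A i with hAAdef
  have hAAres : ∀ i, IsLocalRing.residue O₁ (AA i) = p.coeff i := by
    intro i
    by_cases hi : i = 1
    · subst hi
      simp only [hAAdef, if_pos rfl, map_add, map_pow, hTres, hAres]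
      rw [zero_pow (by omega)]
      ring
    · simp only [hAAdef, if_neg hi, hAres]
  set cc : ℕ → K := fun i => ((AA i : K)) with hccdef
  have hccO₁ : ∀ i, v₁ (cc i) ≤ 1 := fun i => (O₁.valuation_le_one_iff _).mpr (AA i).2
  have hccv2 : ∀ i, i ≠ 1 → v₂ (cc i) < 1 := by
    intro i hi
    simp only [hccdef, hAAdef, if_neg hi]
    exact hAv2 i
  have hcc1 : cc 1 = (A 1 : K) + t ^ (n - 1) := by
    simp only [hccdef, hAAdef, if_pos rfl]
    push_cast [hTdef]
    ring
  -- Step 5 : the key bound : 1 ≤ v₁ (x^n + ∑ cc i x^i) for all x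
  have keybound : ∀ x : K, 1 ≤ v₁ (x ^ n + ∑ i ∈ Finset.range n, cc i * x ^ i) := by
    intro x
    rcases le_or_gt (v₁ x) 1 with hx | hx
    · have hxO₁ : x ∈ O₁ := (O₁.valuation_le_one_iff x).mp hx
      set w : O₁ := ⟨x, hxO₁⟩ ^ n + ∑ i ∈ Finset.range n, AA i * ⟨x, hxO₁⟩ ^ i with hwdef
      have hwcoe : (w : K) = x ^ n + ∑ i ∈ Finset.range n, cc i * x ^ i := by
        push_cast [hwdef, hccdef]
        rfl
      have hwres : IsLocalRing.residue O₁ w = p.eval (IsLocalRing.residue O₁ ⟨x, hxO₁⟩) := by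
        rw [hwdef, map_add, map_pow, map_sum]
        rw [eval_eq_sum_range' (show p.natDegree < n + 1 by omega), Finset.sum_range_succ]
        rw [show p.coeff n = 1 from hmon.coeff_natDegree]
        rw [one_mul, add_comm]
        congr 1
        refine Finset.sum_congr rfl (fun i _ => ?_)
        rw [map_mul, map_pow, hAAres]
      have hwne : IsLocalRing.residue O₁ w ≠ 0 := by
        rw [hwres]; exact hnoroot _
      have hwnm : w ∉ IsLocalRing.maximalIdeal O₁ := by
        intro hmem
        exact hwne (Ideal.Quotient.eq_zero_iff_mem.mpr hmem)
      rw [O₁.valuation_lt_one_iff] at hwnm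
      push_neg at hwnm
      rwa [hwcoe] at hwnm
    · have hxn0 : (v₁ x) ^ n ≠ 0 := pow_ne_zero _ ((zero_lt_one.trans hx).ne')
      have hsum : v₁ (∑ i ∈ Finset.range n, cc i * x ^ i) < (v₁ x) ^ n := by
        apply Valuation.map_sum_lt _ hxn0
        intro i hi
        rw [v₁.map_mul, v₁.map_pow]
        calc v₁ (cc i) * (v₁ x) ^ i ≤ 1 * (v₁ x) ^ i := mul_le_mul_left (hccO₁ i) _
        _ = (v₁ x) ^ i := one_mul _
        _ < (v₁ x) ^ n := pow_lt_pow_right₀ hx (Finset.mem_range.mp hi)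
      rw [Valuation.map_add_eq_of_lt_left _ (by rwa [v₁.map_pow])]
      rw [v₁.map_pow]
      exact (one_lt_pow₀ hx (by omega)).le
  -- Step 6 : the Hensel polynomial over O₂
  have htinv2 : v₂ t⁻¹ < 1 := by
    rw [map_inv₀]
    exact inv_lt_one_of_one_lt₀ ht2
  have htinvle : ∀ m : ℕ, v₂ (t⁻¹ ^ m) ≤ 1 := by
    intro m
    rw [v₂.map_pow]
    exact pow_le_one₀ zero_le' htinv2.le
  set dd : ℕ → K := fun i => if i = 0 then (cc 0 - t) * t⁻¹ ^ n else cc i * t⁻¹ ^ (n - i)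
    with hdddef
  have hdd0 : v₂ (dd 0) < 1 := by
    have hsub : v₂ (cc 0 - t) = v₂ t := by
      rw [sub_eq_add_neg, Valuation.map_add_eq_of_lt_right, v₂.map_neg]
      rw [v₂.map_neg]
      exact lt_trans (hccv2 0 (by omega)) ht2
    simp only [hdddef, if_pos rfl]
    rw [v₂.map_mul, hsub, v₂.map_pow, map_inv₀]
    have hn1 : n = 1 + (n - 1) := by omega
    rw [hn1, pow_add, pow_one, ← mul_assoc, mul_inv_cancel₀ ht2ne, one_mul]
    exact pow_lt_one₀ zero_le' (inv_lt_one_of_one_lt₀ ht2) (by omega)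
  have hdd1sub : dd 1 - 1 = (A 1 : K) * t⁻¹ ^ (n - 1) := by
    simp only [hdddef, if_neg one_ne_zero]
    rw [hcc1, add_mul]
    have : t ^ (n - 1) * t⁻¹ ^ (n - 1) = 1 := by
      rw [inv_pow, mul_inv_cancel₀ (pow_ne_zero _ ht0)]
    rw [this]
    ring
  have hdd1 : v₂ (dd 1) = 1 := by
    have h1 : v₂ (dd 1 - 1) < 1 := by
      rw [hdd1sub, v₂.map_mul]
      exact gz_mul_lt_one' (hAv2 1) (htinvle (n - 1))
    have : dd 1 = 1 + (dd 1 - 1) := by ring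
    rw [this, Valuation.map_add_eq_of_lt_left _ (by rwa [v₂.map_one]), v₂.map_one]
  have hddmem : ∀ i, dd i ∈ O₂ := by
    intro i
    rw [← O₂.valuation_le_one_iff]
    rcases Nat.eq_zero_or_pos i with h0 | hpos
    · subst h0; exact hdd0.le
    · by_cases h1 : i = 1
      · subst h1; exact hdd1.le
      · simp only [hdddef, if_neg (by omega : i ≠ 0)]
        rw [v₂.map_mul]
        exact (gz_mul_lt_one' (hccv2 i h1) (htinvle (n - i))).le
  have hddlt : ∀ i, i ≠ 1 → v₂ (dd i) < 1 := by
    intro i hi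
    rcases Nat.eq_zero_or_pos i with h0 | hpos
    · subst h0; exact hdd0
    · simp only [hdddef, if_neg (by omega : i ≠ 0)]
      rw [v₂.map_mul]
      exact gz_mul_lt_one' (hccv2 i hi) (htinvle (n - i))
  set DD : ℕ → O₂ := fun i => ⟨dd i, hddmem i⟩ with hDDdef
  set H : Polynomial O₂ := X ^ n + ∑ i ∈ Finset.range n, C (DD i) * X ^ i with hHdef
  have hHsumdeg : (∑ i ∈ Finset.range n, C (DD i) * X ^ i : Polynomial O₂).degree < n := by
    rw [← Fin.sum_univ_eq_sum_range (fun i => C (DD i) * X ^ i) n]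
    exact degree_sum_fin_lt _
  have hHmonic : H.Monic := monic_X_pow_add hHsumdeg
  have hHcoeff : ∀ j, j < n → H.coeff j = DD j := by
    intro j hj
    rw [hHdef]
    rw [coeff_add, coeff_X_pow, if_neg (by omega : j ≠ n), zero_add]
    rw [finset_sum_coeff]
    rw [Finset.sum_eq_single j]
    · rw [coeff_C_mul, coeff_X_pow, if_pos rfl, mul_one]
    · intro i _ hij
      rw [coeff_C_mul, coeff_X_pow, if_neg (fun h => hij h.symm), mul_zero]
    · intro h
      exact absurd (Finset.mem_range.mpr hj) h
  have hHeval0 : H.eval 0 ∈ IsLocalRing.maximalIdeal O₂ := by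
    rw [← coeff_zero_eq_eval_zero, hHcoeff 0 (by omega), O₂.valuation_lt_one_iff]
    exact hdd0
  have hHderiv : IsUnit (H.derivative.eval 0) := by
    rw [← coeff_zero_eq_eval_zero, coeff_derivative, hHcoeff 1 (by omega)]
    norm_num
    rw [(O₂.valuation_eq_one_iff _)]
    exact hdd1
  obtain ⟨y, hyroot, -⟩ := h₂.is_henselian H hHmonic 0 hHeval0 hHderiv
  -- Step 7 : transfer the root to K and conclude
  set z : K := (y : K) with hzdef
  have hzeq : z ^ n + ∑ i ∈ Finset.range n, dd i * z ^ i = 0 := by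
    have h0 : ((H.eval y : O₂) : K) = 0 := by
      rw [hyroot]
      rfl
    have hmap : ((H.eval y : O₂) : K) = (H.map (algebraMap O₂ K)).eval z := by
      rw [eval_map, hzdef]
      exact (eval₂_at_apply (algebraMap O₂ K) y).symm
    rw [hmap] at h0
    rw [hHdef] at h0
    simp only [Polynomial.map_add, Polynomial.map_pow, Polynomial.map_X,
      Polynomial.map_sum, Polynomial.map_mul, Polynomial.map_C] at h0
    simp only [eval_add, eval_pow, eval_X, eval_finset_sum, eval_mul, eval_C] at h0
    convert h0 using 2
    rfl
  have hpowkey : ∀ i, i < n → t ^ n * t⁻¹ ^ (n - i) = t ^ i := by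
    intro i hi
    have : t ^ n = t ^ i * t ^ (n - i) := by
      rw [← pow_add]
      congr 1
      omega
    rw [this, mul_assoc, inv_pow, mul_inv_cancel₀ (pow_ne_zero _ ht0), mul_one]
  have hident : (t * z) ^ n + ∑ i ∈ Finset.range n, cc i * (t * z) ^ i
      = t ^ n * (z ^ n + ∑ i ∈ Finset.range n, dd i * z ^ i) + t := by
    rw [mul_add, Finset.mul_sum]
    have hterm : ∀ i ∈ Finset.range n,
        t ^ n * (dd i * z ^ i) = cc i * (t * z) ^ i - (if i = 0 then t else 0) := by
      intro i hi
      rcases Nat.eq_zero_or_pos i with h0 | hpos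
      · subst h0
        simp only [hdddef, if_pos rfl, pow_zero, mul_one, eq_self_iff_true, if_true]
        rw [show t ^ n * ((cc 0 - t) * t⁻¹ ^ n) = (cc 0 - t) * (t ^ n * t⁻¹ ^ n) by ring]
        rw [inv_pow, mul_inv_cancel₀ (pow_ne_zero _ ht0), mul_one]
      · simp only [hdddef, if_neg (by omega : i ≠ 0), if_neg (by omega : i ≠ 0)]
        rw [mul_pow, show t ^ n * (cc i * t⁻¹ ^ (n - i) * z ^ i)
            = cc i * (t ^ n * t⁻¹ ^ (n - i)) * z ^ i by ring]
        rw [hpowkey i (Finset.mem_range.mp hi)]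
        ring
    rw [Finset.sum_congr rfl hterm]
    rw [Finset.sum_sub_distrib]
    rw [Finset.sum_ite_eq' (Finset.range n) 0 (fun _ => t)]
    rw [if_pos (Finset.mem_range.mpr hn0)]
    rw [mul_pow]
    ring
  have hfinal : (t * z) ^ n + ∑ i ∈ Finset.range n, cc i * (t * z) ^ i = t := by
    rw [hident, hzeq, mul_zero, zero_add]
  have := keybound (t * z)
  rw [hfinal] at this
  exact absurd (lt_of_le_of_lt this ht1) (lt_irrefl _)

end Aux

/-- If `O₁` and `O₂` are henselian valuation rings on a field `K` and at least one of
their residue fields is not separably closed, then `O₁` and `O₂` are comparable. -/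
theorem henselian_valuation_rings_comparable_of_residue_field_not_sepClosed
    {K : Type*} [Field K] (O₁ O₂ : ValuationSubring K)
    (h₁ : HenselianLocalRing O₁) (h₂ : HenselianLocalRing O₂)
    (hres : ¬ IsSepClosed (IsLocalRing.ResidueField O₁) ∨
      ¬ IsSepClosed (IsLocalRing.ResidueField O₂)) :
    O₁ ≤ O₂ ∨ O₂ ≤ O₁ := by
  rcases hres with h | h
  · exact aux_comparable O₁ O₂ h₂ h
  · exact (aux_comparable O₂ O₁ h₁ h).symm
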